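/- Let a ≥ 1 and b ≥ 2a be integers, and define the sequence x_1,…,x_b of integers by x_k = (−2)^k for k ≠ 2a and x_{2a} = −(2^{2a} − 2). Then there is exactly one unordered pair {T_1, T_2} of disjoint nonempty subsets T_1, T_2 ⊆ {1,…,b} with Σ_{k∈T_1} x_k = Σ_{k∈T_2} x_k, and for this pair |T_1| = |T_2| = a. -/
import Mathlib


/-- The sequence `x_k = (−2)^k` for `k ≠ 2a`, and `x_{2a} = −(2^{2a} − 2)`. -/
def seqX (a : ℕ) : ℕ → ℤ := fun ke =>
  if ke = 2 * a then -(2 ^ (2 * a) - 2) else (-2) ^ ke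

open Finset


def epsAux (S₁ S₂ : Finset ℕ) (k : ℕ) : ℤ :=
  (if k ∈ S₁ then 1 else 0) - (if k ∈ S₂ then 1 else 0)

lemma epsAux_abs_le (S₁ S₂ : Finset ℕ) (k : ℕ) : |epsAux S₁ S₂ k| ≤ 1 := by
  unfold epsAux; split_ifs <;> simp

lemma epsAux_eq_one {S₁ S₂ : Finset ℕ} {k : ℕ} (h : epsAux S₁ S₂ k = 1) : k ∈ S₁ := by
  by_contra hk; unfold epsAux at h; split_ifs at h <;> omega

lemma epsAux_eq_neg_one {S₁ S₂ : Finset ℕ} {k : ℕ} (h : epsAux S₁ S₂ k = -1) : k ∈ S₂ := by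
  by_contra hk; unfold epsAux at h; split_ifs at h <;> omega

lemma s15_sum_two_pow (t : ℕ) : ∑ k ∈ range t, (2:ℤ)^k = 2^t - 1 := by
  induction t with
  | zero => simp
  | succ n ih => rw [Finset.sum_range_succ, ih]; ring

lemma s15_geom4 (n : ℕ) : 3 * ∑ i ∈ range n, (4:ℤ)^i = 4^n - 1 := by
  induction n with
  | zero => simp
  | succ n ih => rw [Finset.sum_range_succ]; rw [pow_succ]; linarith

lemma s15_abs_sum_le (s : Finset ℕ) (f : ℕ → ℤ) (h : ∀ k, |f k| ≤ 1) :
    |∑ k ∈ s, f k * 2^k| ≤ ∑ k ∈ s, 2^k := by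
  calc |∑ k ∈ s, f k * 2^k| ≤ ∑ k ∈ s, |f k * 2^k| := Finset.abs_sum_le_sum_abs _ _
  _ ≤ ∑ k ∈ s, 2^k := by
      apply Finset.sum_le_sum
      intro i _
      rw [abs_mul, abs_pow]
      calc |f i| * |(2:ℤ)|^i ≤ 1 * |(2:ℤ)|^i :=
            mul_le_mul_of_nonneg_right (h i) (by positivity)
      _ = 2^i := by norm_num

lemma s15_digits_zero (B : ℕ) (f : ℕ → ℤ) (hbd : ∀ k, |f k| ≤ 1)
    (hsum : ∑ k ∈ range B, f k * 2^k = 0) : ∀ k, k < B → f k = 0 := by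
  by_contra h
  push_neg at h
  obtain ⟨k0, hk0B, hk0⟩ := h
  set s : Finset ℕ := (range B).filter (fun k => f k ≠ 0) with hs
  have hne : s.Nonempty := ⟨k0, by simp [hs, hk0, hk0B]⟩
  set t := s.max' hne with ht
  have hts : t ∈ s := s.max'_mem hne
  have htB : t < B := by simpa using (mem_filter.mp hts).1
  have hft : f t ≠ 0 := (mem_filter.mp hts).2
  have htop : ∀ k, t < k → k < B → f k = 0 := by
    intro k hk hkB
    by_contra hfk
    have hks : k ∈ s := by simp [hs, hfk, hkB]
    have := s.le_max' k hks
    omega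
  have h1 : ∑ k ∈ range B, f k * 2^k = ∑ k ∈ range (t+1), f k * 2^k := by
    refine (Finset.sum_subset (fun x hx => ?_) (fun x hxB hxt => ?_)).symm
    · simp only [mem_range] at hx ⊢; omega
    · simp only [mem_range] at hxB hxt
      rw [htop x (by omega) hxB]; ring
  rw [h1, Finset.sum_range_succ] at hsum
  have hR := s15_abs_sum_le (range t) f hbd
  rw [s15_sum_two_pow] at hR
  obtain ⟨hR1, hR2⟩ := abs_le.mp hR
  have hft1 : f t = 1 ∨ f t = -1 := by
    have := abs_le.mp (hbd t); omega
  have hQ : (1:ℤ) ≤ 2^t := one_le_pow₀ (by norm_num)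
  rcases hft1 with h | h <;> rw [h] at hsum <;> linarith

lemma s15_digits_unique (B m : ℕ) (f : ℕ → ℤ) (hm : 0 < m) (hmB : m < B)
    (hbd : ∀ k, |f k| ≤ 1) (h0 : f 0 = 0) (hfm : f m = 0)
    (hsum : ∑ k ∈ range B, f k * 2^k = 2^m - 2) :
    ∀ k, k < B → f k = if 1 ≤ k ∧ k < m then 1 else 0 := by
  -- Step 1: all digits above m vanish
  have htopall : ∀ k, m < k → k < B → f k = 0 := by
    by_contra h
    push_neg at h
    obtain ⟨k0, hk0m, hk0B, hk0⟩ := h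
    set s : Finset ℕ := (range B).filter (fun k => m < k ∧ f k ≠ 0) with hs
    have hne : s.Nonempty := ⟨k0, by simp [hs, hk0, hk0B, hk0m]⟩
    set t := s.max' hne with ht
    have hts : t ∈ s := s.max'_mem hne
    have htB : t < B := by simpa using (mem_filter.mp hts).1
    have htm : m < t := (mem_filter.mp hts).2.1
    have hft : f t ≠ 0 := (mem_filter.mp hts).2.2
    have htop : ∀ k, t < k → k < B → f k = 0 := by
      intro k hk hkB
      by_contra hfk
      have hks : k ∈ s := by
        simp only [hs, mem_filter, mem_range]
        exact ⟨hkB, by omega, hfk⟩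
      have := s.le_max' k hks
      omega
    have h1 : ∑ k ∈ range B, f k * 2^k = ∑ k ∈ range (t+1), f k * 2^k := by
      refine (Finset.sum_subset (fun x hx => ?_) (fun x hxB hxt => ?_)).symm
      · simp only [mem_range] at hx ⊢; omega
      · simp only [mem_range] at hxB hxt
        rw [htop x (by omega) hxB]; ring
    rw [h1, Finset.sum_range_succ] at hsum
    -- bound the low part, subtracting positions 0 and m
    have hR := s15_abs_sum_le (range t) f hbd
    rw [s15_sum_two_pow] at hR
    have hkey : |∑ k ∈ range t, f k * 2^k| ≤ 2^t - 1 - 1 - 2^m := by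
      have hpair : ({0, m} : Finset ℕ) ⊆ range t := by
        intro x hx; simp only [mem_insert, mem_singleton] at hx
        rcases hx with rfl | rfl <;> simp [mem_range] <;> omega
      have hsub : ∑ k ∈ ({0, m} : Finset ℕ), (2^k - |f k * 2^k|)
          ≤ ∑ k ∈ range t, (2^k - |f k * 2^k|) := by
        apply Finset.sum_le_sum_of_subset_of_nonneg hpair
        intro i _ _
        have : |f i * 2^i| ≤ 2^i := by
          rw [abs_mul, abs_pow]
          calc |f i| * |(2:ℤ)|^i ≤ 1 * |(2:ℤ)|^i :=
                mul_le_mul_of_nonneg_right (hbd i) (by positivity)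
          _ = 2^i := by norm_num
        linarith
      rw [Finset.sum_pair (by omega : (0:ℕ) ≠ m)] at hsub
      rw [h0, hfm] at hsub
      simp only [zero_mul, abs_zero, pow_zero] at hsub
      rw [Finset.sum_sub_distrib, s15_sum_two_pow] at hsub
      have habs := Finset.abs_sum_le_sum_abs (fun k => f k * 2^k) (range t)
      calc |∑ k ∈ range t, f k * 2^k| ≤ ∑ k ∈ range t, |f k * 2^k| := habs
      _ ≤ 2^t - 1 - 1 - 2^m := by linarith
    obtain ⟨hR1, hR2⟩ := abs_le.mp hkey
    have hft1 : f t = 1 ∨ f t = -1 := by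
      have := abs_le.mp (hbd t); omega
    have hQ : (2:ℤ)^(m+1) ≤ 2^t := pow_le_pow_right₀ (by norm_num) (by omega)
    have hQ2 : (2:ℤ)^(m+1) = 2 * 2^m := by ring
    have hP : (1:ℤ) ≤ 2^m := one_le_pow₀ (by norm_num)
    rcases hft1 with h | h <;> rw [h] at hsum <;> linarith
  -- Step 2: low digits are all 1
  have hlow : ∑ k ∈ range B, f k * 2^k = ∑ k ∈ range m, f k * 2^k := by
    refine (Finset.sum_subset (fun x hx => ?_) (fun x hxB hxt => ?_)).symm
    · simp only [mem_range] at hx ⊢; omega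
    · simp only [mem_range] at hxB hxt
      rcases Nat.lt_or_ge x (m+1) with hx | hx
      · have : x = m := by omega
        rw [this, hfm]; ring
      · rw [htopall x (by omega) hxB]; ring
  rw [hlow] at hsum
  have hzero : ∑ k ∈ range m, ((if k = 0 then 0 else 1) - f k) * 2^k = 0 := by
    have h2 : ∑ k ∈ range m, (if k = 0 then (0:ℤ) else 1) * 2^k = 2^m - 2 := by
      have h0m : 0 ∈ range m := by simp [mem_range]; omega
      rw [← Finset.sum_erase_add _ _ h0m]
      simp only [if_pos rfl, zero_mul, add_zero]
      rw [Finset.sum_congr rfl (fun x hx => by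
        rw [if_neg (Finset.ne_of_mem_erase hx)])]
      rw [Finset.sum_erase_eq_sub h0m]
      simp only [one_mul, pow_zero, if_true]
      rw [s15_sum_two_pow]
      ring
    simp only [sub_mul]
    rw [Finset.sum_sub_distrib, h2, hsum]
    ring
  have hterm := (Finset.sum_eq_zero_iff_of_nonneg (fun k _ => by
      have hfk := abs_le.mp (hbd k)
      by_cases hk : k = 0
      · subst hk; simp [h0]
      · simp only [if_neg hk]
        have : (0:ℤ) ≤ 1 - f k := by omega
        positivity)).mp hzero
  intro k hk
  by_cases hk1 : 1 ≤ k ∧ k < m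
  · have := hterm k (by simp [mem_range]; omega)
    simp only [if_neg (by omega : ¬ k = 0)] at this
    have h2 : (0:ℤ) < 2^k := by positivity
    have : (1 - f k) = 0 := by
      rcases mul_eq_zero.mp this with h | h
      · exact h
      · exfalso; omega
    simp only [if_pos hk1]; omega
  · simp only [if_neg hk1]
    rcases Nat.eq_zero_or_pos k with rfl | hk0
    · exact h0
    · rcases Nat.lt_or_ge k m with hkm | hkm
      · exfalso; exact hk1 ⟨hk0, hkm⟩
      · rcases Nat.eq_or_lt_of_le hkm with rfl | hkm'
        · exact hfm
        · exact htopall k hkm' hk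


lemma s15_reduction (a b : ℕ) (ha : 1 ≤ a) (hb : 2*a ≤ b) (S₁ S₂ : Finset ℕ)
    (h₁ : S₁ ⊆ Finset.Icc 1 b) (h₂ : S₂ ⊆ Finset.Icc 1 b)
    (hs : ∑ k ∈ S₁, seqX a k = ∑ k ∈ S₂, seqX a k) :
    ∑ k ∈ range (b+1), ((-1:ℤ)^k * epsAux S₁ S₂ k) * 2^k
      = epsAux S₁ S₂ (2*a) * (2^(2*a+1) - 2) := by
  have hsplit : ∀ S : Finset ℕ, S ⊆ Finset.Icc 1 b →
      ∑ k ∈ Finset.Icc 1 b, (if k ∈ S then (1:ℤ) else 0) * seqX a k = ∑ k ∈ S, seqX a k := by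
    intro S hS
    simp only [ite_mul, one_mul, zero_mul]
    rw [Finset.sum_ite_mem, Finset.inter_eq_right.mpr hS]
  have h0 : ∑ k ∈ Finset.Icc 1 b, epsAux S₁ S₂ k * seqX a k = 0 := by
    unfold epsAux
    simp only [sub_mul]
    rw [Finset.sum_sub_distrib, hsplit S₁ h₁, hsplit S₂ h₂, hs, sub_self]
  have hmem2a : 2*a ∈ Finset.Icc 1 b := by
    simp only [Finset.mem_Icc]; omega
  have hpow2a : ((-2:ℤ))^(2*a) = 2^(2*a) := (even_two_mul a).neg_pow 2
  have hdiff : ∑ k ∈ Finset.Icc 1 b, epsAux S₁ S₂ k * seqX a k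
      - ∑ k ∈ Finset.Icc 1 b, epsAux S₁ S₂ k * (-2:ℤ)^k
      = epsAux S₁ S₂ (2*a) * (-(2^(2*a) - 2) - 2^(2*a)) := by
    rw [← Finset.sum_sub_distrib]
    have hcong : ∀ k ∈ Finset.Icc 1 b, epsAux S₁ S₂ k * seqX a k - epsAux S₁ S₂ k * (-2:ℤ)^k
        = epsAux S₁ S₂ k * (seqX a k - (-2)^k) := fun k _ => by ring
    rw [Finset.sum_congr rfl hcong]
    rw [Finset.sum_eq_single_of_mem (2*a) hmem2a (fun k _ hne => by
      simp [seqX, hne])]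
    simp [seqX, hpow2a]
  have hmain : ∑ k ∈ Finset.Icc 1 b, epsAux S₁ S₂ k * (-2:ℤ)^k
      = epsAux S₁ S₂ (2*a) * (2^(2*a+1) - 2) := by
    have h2 : (2:ℤ)^(2*a+1) = 2 * 2^(2*a) := by ring
    rw [h0] at hdiff
    rw [h2]
    linarith [hdiff]
  have hconv : ∀ k ∈ Finset.Icc 1 b, epsAux S₁ S₂ k * (-2:ℤ)^k
      = ((-1:ℤ)^k * epsAux S₁ S₂ k) * 2^k := by
    intro k _
    rw [neg_pow]
    ring
  rw [← hmain, Finset.sum_congr rfl hconv]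
  refine (Finset.sum_subset (fun x hx => ?_) (fun x hxB hxI => ?_)).symm
  · simp only [Finset.mem_Icc] at hx; simp only [mem_range]; omega
  · simp only [mem_range] at hxB
    simp only [Finset.mem_Icc] at hxI
    have hx0 : x = 0 := by omega
    subst hx0
    have h1 : (0:ℕ) ∉ S₁ := fun h => by
      have := h₁ h; simp [Finset.mem_Icc] at this
    have h2 : (0:ℕ) ∉ S₂ := fun h => by
      have := h₂ h; simp [Finset.mem_Icc] at this
    simp [epsAux, h1, h2]

lemma s15_zerocase (a b : ℕ) (ha : 1 ≤ a) (hb : 2*a ≤ b) (S₁ S₂ : Finset ℕ)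
    (h₁ : S₁ ⊆ Finset.Icc 1 b) (h₂ : S₂ ⊆ Finset.Icc 1 b)
    (hd : Disjoint S₁ S₂)
    (hs : ∑ k ∈ S₁, seqX a k = ∑ k ∈ S₂, seqX a k)
    (hne : S₁.Nonempty) (hn1 : 2*a ∉ S₁) (hn2 : 2*a ∉ S₂) : False := by
  have hred := s15_reduction a b ha hb S₁ S₂ h₁ h₂ hs
  have he : epsAux S₁ S₂ (2*a) = 0 := by simp [epsAux, hn1, hn2]
  rw [he, zero_mul] at hred
  have hdz := s15_digits_zero (b+1) (fun k => (-1:ℤ)^k * epsAux S₁ S₂ k)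
    (fun k => by
      rw [abs_mul, abs_pow, abs_neg, abs_one, one_pow, one_mul]
      exact epsAux_abs_le S₁ S₂ k) hred
  obtain ⟨k, hk⟩ := hne
  have hkI := h₁ hk
  rw [Finset.mem_Icc] at hkI
  have hk2 : k ∉ S₂ := Finset.disjoint_left.mp hd hk
  have heps : epsAux S₁ S₂ k = 1 := by simp [epsAux, hk, hk2]
  have := hdz k (by omega)
  simp only [heps, mul_one] at this
  rcases Nat.even_or_odd k with hp | hp
  · rw [hp.neg_one_pow] at this; norm_num at this
  · rw [hp.neg_one_pow] at this; norm_num at this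

lemma s15_half (a b : ℕ) (ha : 1 ≤ a) (hb : 2*a ≤ b) (S₁ S₂ : Finset ℕ)
    (h₁ : S₁ ⊆ Finset.Icc 1 b) (h₂ : S₂ ⊆ Finset.Icc 1 b)
    (hd : Disjoint S₁ S₂)
    (hs : ∑ k ∈ S₁, seqX a k = ∑ k ∈ S₂, seqX a k)
    (hmem : 2*a ∈ S₁) :
    S₁ = (range a).image (fun i => 2*i+2) ∧ S₂ = (range a).image (fun i => 2*i+1) := by
  have hred := s15_reduction a b ha hb S₁ S₂ h₁ h₂ hs
  have hnot : 2*a ∉ S₂ := Finset.disjoint_left.mp hd hmem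
  have he : epsAux S₁ S₂ (2*a) = 1 := by simp [epsAux, hmem, hnot]
  rw [he, one_mul] at hred
  set f : ℕ → ℤ := fun k => (-1)^k * epsAux S₁ S₂ k with hf
  have hf2a : f (2*a) = 1 := by
    simp only [hf, he, mul_one]
    exact (even_two_mul a).neg_one_pow
  set g : ℕ → ℤ := fun k => if k = 2*a then 0 else f k with hg
  have hmemr : 2*a ∈ range (b+1) := by simp only [mem_range]; omega
  have hgsum : ∑ k ∈ range (b+1), g k * 2^k = 2^(2*a) - 2 := by
    rw [← Finset.sum_erase_add _ _ hmemr] at hred ⊢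
    have hcong : ∑ k ∈ (range (b+1)).erase (2*a), g k * 2^k
        = ∑ k ∈ (range (b+1)).erase (2*a), ((-1:ℤ)^k * epsAux S₁ S₂ k) * 2^k := by
      refine Finset.sum_congr rfl (fun x hx => ?_)
      have hxne := Finset.ne_of_mem_erase hx
      simp [hg, hf, hxne]
    rw [hcong]
    have hE : ((-1:ℤ))^(2*a) = 1 := (even_two_mul a).neg_one_pow
    rw [he, hE, one_mul, one_mul] at hred
    have hg2a : g (2*a) = 0 := by simp [hg]
    rw [hg2a]
    have h2 : (2:ℤ)^(2*a+1) = 2*2^(2*a) := by ring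
    rw [h2] at hred
    linarith
  have hbd : ∀ k, |g k| ≤ 1 := fun k => by
    by_cases hk : k = 2*a
    · simp [hg, hk]
    · simp only [hg, if_neg hk, hf]
      rw [abs_mul, abs_pow, abs_neg, abs_one, one_pow, one_mul]
      exact epsAux_abs_le S₁ S₂ k
  have h1S : (0:ℕ) ∉ S₁ := fun h => by
    have := h₁ h; simp [Finset.mem_Icc] at this
  have h2S : (0:ℕ) ∉ S₂ := fun h => by
    have := h₂ h; simp [Finset.mem_Icc] at this
  have hg0 : g 0 = 0 := by
    simp [hg, hf, epsAux, h1S, h2S, (by omega : ¬ (0:ℕ) = 2*a)]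
  have hdig := s15_digits_unique (b+1) (2*a) g (by omega) (by omega) hbd hg0
    (by simp [hg]) hgsum
  -- recover epsilon values
  have hepsg : ∀ k, k ≠ 2*a → epsAux S₁ S₂ k = (-1)^k * g k := by
    intro k hk
    simp only [hg, if_neg hk, hf]
    rw [← mul_assoc, ← pow_add]
    rw [Even.neg_one_pow ⟨k, rfl⟩, one_mul]
  constructor
  · ext k
    simp only [Finset.mem_image, mem_range]
    constructor
    · intro hk
      have hkI := h₁ hk
      rw [Finset.mem_Icc] at hkI
      have hk2 : k ∉ S₂ := Finset.disjoint_left.mp hd hk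
      have heps : epsAux S₁ S₂ k = 1 := by simp [epsAux, hk, hk2]
      by_cases hke : k = 2*a
      · exact ⟨a-1, by omega, by omega⟩
      · have hgk : g k = (-1:ℤ)^k := by
          have := hepsg k hke
          rw [heps] at this
          rcases Nat.even_or_odd k with hp | hp
          · rw [hp.neg_one_pow] at this ⊢; linarith
          · rw [hp.neg_one_pow] at this ⊢; linarith
        have hdk := hdig k (by omega)
        rcases Nat.even_or_odd k with hp | hp
        · rw [hp.neg_one_pow] at hgk
          rw [hgk] at hdk
          split_ifs at hdk with hcond
          · obtain ⟨c, hc⟩ := hp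
            exact ⟨c-1, by omega, by omega⟩
          · norm_num at hdk
        · rw [hp.neg_one_pow] at hgk
          rw [hgk] at hdk
          split_ifs at hdk <;> norm_num at hdk
    · rintro ⟨i, hi, rfl⟩
      by_cases hke : 2*i+2 = 2*a
      · rw [hke]; exact hmem
      · have hdk := hdig (2*i+2) (by omega)
        rw [if_pos (by omega)] at hdk
        have heps : epsAux S₁ S₂ (2*i+2) = 1 := by
          rw [hepsg _ hke, hdk, mul_one]
          exact Even.neg_one_pow ⟨i+1, by ring⟩
        exact epsAux_eq_one heps
  · ext k
    simp only [Finset.mem_image, mem_range]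
    constructor
    · intro hk
      have hkI := h₂ hk
      rw [Finset.mem_Icc] at hkI
      have hk1 : k ∉ S₁ := Finset.disjoint_right.mp hd hk
      have heps : epsAux S₁ S₂ k = -1 := by simp [epsAux, hk, hk1]
      have hke : k ≠ 2*a := fun h => hnot (h ▸ hk)
      have hdk := hdig k (by omega)
      rcases Nat.even_or_odd k with hp | hp
      · have hgk : g k = -1 := by
          have := hepsg k hke
          rw [heps, hp.neg_one_pow, one_mul] at this
          linarith
        rw [hgk] at hdk
        split_ifs at hdk <;> norm_num at hdk
      · have hgk : g k = 1 := by
          have := hepsg k hke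
          rw [heps, hp.neg_one_pow] at this
          linarith
        rw [hgk] at hdk
        split_ifs at hdk with hcond
        · obtain ⟨c, hc⟩ := hp
          exact ⟨c, by omega, by omega⟩
        · norm_num at hdk
    · rintro ⟨i, hi, rfl⟩
      have hke : 2*i+1 ≠ 2*a := by omega
      have hdk := hdig (2*i+1) (by omega)
      rw [if_pos (by omega)] at hdk
      have heps : epsAux S₁ S₂ (2*i+1) = -1 := by
        rw [hepsg _ hke, hdk, mul_one]
        exact Odd.neg_one_pow ⟨i, by ring⟩
      exact epsAux_eq_neg_one heps

/-- for `1 ≤ a` and `2a ≤ b`, there is exactly one unordered pair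
`{T₁, T₂}` of disjoint nonempty subsets of `{1, …, b}` with
`∑_{k ∈ T₁} x_k = ∑_{k ∈ T₂} x_k`, and for this pair `|T₁| = |T₂| = a`. -/
theorem stmt15 (a b : ℕ) (ha : 1 ≤ a) (hb : 2 * a ≤ b) :
    ∃ T₁ T₂ : Finset ℕ,
      (T₁ ⊆ Finset.Icc 1 b ∧ T₂ ⊆ Finset.Icc 1 b ∧ T₁.Nonempty ∧ T₂.Nonempty ∧
        Disjoint T₁ T₂ ∧ ∑ ke ∈ T₁, seqX a ke = ∑ ke ∈ T₂, seqX a ke) ∧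
      T₁.card = a ∧ T₂.card = a ∧
      ∀ S₁ S₂ : Finset ℕ,
        (S₁ ⊆ Finset.Icc 1 b ∧ S₂ ⊆ Finset.Icc 1 b ∧ S₁.Nonempty ∧ S₂.Nonempty ∧
          Disjoint S₁ S₂ ∧ ∑ ke ∈ S₁, seqX a ke = ∑ ke ∈ S₂, seqX a ke) →
        ((S₁ = T₁ ∧ S₂ = T₂) ∨ (S₁ = T₂ ∧ S₂ = T₁)) := by
  
  refine ⟨(range a).image (fun i => 2*i+2), (range a).image (fun i => 2*i+1),
    ⟨?_, ?_, ?_, ?_, ?_, ?_⟩, ?_, ?_, ?_⟩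
  · intro x hx
    simp only [Finset.mem_image, mem_range] at hx
    obtain ⟨i, hi, rfl⟩ := hx
    simp only [Finset.mem_Icc]; omega
  · intro x hx
    simp only [Finset.mem_image, mem_range] at hx
    obtain ⟨i, hi, rfl⟩ := hx
    simp only [Finset.mem_Icc]; omega
  · exact ⟨2, Finset.mem_image.mpr ⟨0, by simp [mem_range]; omega⟩⟩
  · exact ⟨1, Finset.mem_image.mpr ⟨0, by simp [mem_range]; omega⟩⟩
  · rw [Finset.disjoint_left]
    intro x hx hx'
    simp only [Finset.mem_image, mem_range] at hx hx'
    obtain ⟨i, _, hi⟩ := hx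
    obtain ⟨j, _, hj⟩ := hx'
    omega
  · -- the sums are equal
    obtain ⟨a', rfl⟩ : ∃ a', a = a' + 1 := ⟨a - 1, by omega⟩
    rw [Finset.sum_image (fun i _ j _ h => by omega),
        Finset.sum_image (fun i _ j _ h => by omega)]
    have hL : ∀ i ∈ range a', seqX (a'+1) (2*i+2) = 4 * 4^i := by
      intro i hi
      simp only [mem_range] at hi
      rw [seqX, if_neg (by omega)]
      have : 2*i+2 = 2*(i+1) := by ring
      rw [this, pow_mul]
      norm_num [pow_succ]
      ring
    have hR : ∀ i ∈ range (a'+1), seqX (a'+1) (2*i+1) = -2 * 4^i := by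
      intro i hi
      rw [seqX, if_neg (by omega)]
      have : 2*i+1 = 2*i+1 := rfl
      rw [pow_succ, pow_mul]
      norm_num
      ring
    rw [Finset.sum_congr rfl hR, Finset.sum_range_succ, Finset.sum_congr rfl hL]
    rw [seqX, if_pos (by ring_nf)]
    have hG : 3 * ∑ i ∈ range a', (4:ℤ)^i = 4^a' - 1 := s15_geom4 a'
    have hG' : 3 * ∑ i ∈ range (a'+1), (4:ℤ)^i = 4^(a'+1) - 1 := s15_geom4 (a'+1)
    have e1 : ∑ i ∈ range a', (4:ℤ) * 4^i = 4 * ∑ i ∈ range a', (4:ℤ)^i := by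
      rw [Finset.mul_sum]
    have e2 : ∑ i ∈ range (a'+1), (-2:ℤ) * 4^i = -2 * ∑ i ∈ range (a'+1), (4:ℤ)^i := by
      rw [Finset.mul_sum]
    rw [e1, e2]
    have hp : (2:ℤ)^(2*(a'+1)) = 4^(a'+1) := by
      rw [pow_mul]; norm_num
    rw [hp]
    have hps : (4:ℤ)^(a'+1) = 4 * 4^a' := by ring
    rw [hps] at hG' ⊢
    linarith
  · rw [Finset.card_image_of_injective _ (fun i j h => by omega), Finset.card_range]
  · rw [Finset.card_image_of_injective _ (fun i j h => by omega), Finset.card_range]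
  · rintro S₁ S₂ ⟨hs₁, hs₂, hne₁, hne₂, hd, hs⟩
    by_cases hm1 : 2*a ∈ S₁
    · exact Or.inl (s15_half a b ha hb S₁ S₂ hs₁ hs₂ hd hs hm1)
    · by_cases hm2 : 2*a ∈ S₂
      · have := s15_half a b ha hb S₂ S₁ hs₂ hs₁ hd.symm hs.symm hm2
        exact Or.inr ⟨this.2, this.1⟩
      · exact absurd (s15_zerocase a b ha hb S₁ S₂ hs₁ hs₂ hd hs hne₁ hm1 hm2) (fun h => h)
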